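/- The piecewise quadratic function f : ℝ → ℝ defined (for parameters L > 0, U > 0, breakpoints l_{N+2}=0 < l_{N+1} < ⋯ < l_1 with l_i - l_{i+1} = U t_i for t_i ∈ (0,1/L], t_{N+1}=1/L, and suitable values f^i) by: f(x) = (L/2)(x−l_1)² + U(x−l_1) + f¹ on [(l_1+l_2)/2, ∞); f(x) = −(L/2)(x−l_{i+1})² + U(x−l_{i+1}) + f^{i+1} on [l_{i+1}, (l_i+l_{i+1})/2]; f(x) = (L/2)(x−l_{i+1})² + U(x−l_{i+1}) + f^{i+1} on [(l_{i+1}+l_{i+2})/2, l_{i+1}]; and f(x) = (L/2)x² on (−∞, l_{N+1}/2]; is continuously differentiable with L-Lipschitz derivative, satisfies f ≥ 0 with minimum 0 at x = 0, and satisfies f(l_i) = f^i and f′(l_i) = U for i = 1,…,N+1. -/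

import Mathlib

open Set Filter Topology

lemma quad1 (a c u v x : ℝ) :
    HasDerivAt (fun y : ℝ => a * (y - c) ^ 2 + u * (y - c) + v) (2 * a * (x - c) + u) x := by
  have h1 : HasDerivAt (fun y : ℝ => y - c) 1 x := (hasDerivAt_id x).sub_const c
  have h2 := (((h1.pow 2).const_mul a).add (h1.const_mul u)).add_const v
  refine h2.congr_deriv ?_
  norm_num
  ring

lemma quad4 (a x : ℝ) : HasDerivAt (fun y : ℝ => a * y ^ 2) (2 * a * x) x := by
  have h := (hasDerivAt_pow 2 x).const_mul a
  refine h.congr_deriv ?_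
  push_cast
  ring

lemma localDeriv {f A : ℝ → ℝ} {x d a b : ℝ} (hax : a < x) (hxb : x < b)
    (hA : ∀ y, a < y → y < b → f y = A y) (hA' : HasDerivAt A d x) : HasDerivAt f d x :=
  hA'.congr_of_eventuallyEq
    (by filter_upwards [Ioo_mem_nhds hax hxb] with y hy using hA y hy.1 hy.2)

lemma glueDeriv {f A B : ℝ → ℝ} {x d a b : ℝ} (hax : a < x) (hxb : x < b)
    (hA : ∀ y, a < y → y ≤ x → f y = A y) (hB : ∀ y, x ≤ y → y < b → f y = B y)
    (hA' : HasDerivAt A d x) (hB' : HasDerivAt B d x) : HasDerivAt f d x := by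
  have m1 : Set.Ioi a ∈ 𝓝[Set.Iic x] x := mem_nhdsWithin_of_mem_nhds (Ioi_mem_nhds hax)
  have m2 : Set.Iio b ∈ 𝓝[Set.Ici x] x := mem_nhdsWithin_of_mem_nhds (Iio_mem_nhds hxb)
  have e1 : f =ᶠ[𝓝[Set.Iic x] x] A := by
    filter_upwards [m1, self_mem_nhdsWithin] with y hy hy' using hA y hy hy'
  have e2 : f =ᶠ[𝓝[Set.Ici x] x] B := by
    filter_upwards [m2, self_mem_nhdsWithin] with y hy' hy using hB y hy hy'
  have h1 : HasDerivWithinAt f d (Set.Iic x) x :=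
    (hA'.hasDerivWithinAt.congr_of_eventuallyEq e1 (hA x hax le_rfl))
  have h2 : HasDerivWithinAt f d (Set.Ici x) x :=
    (hB'.hasDerivWithinAt.congr_of_eventuallyEq e2 (hB x le_rfl hxb))
  have h3 := h1.union h2
  rw [Set.Iic_union_Ici] at h3
  exact h3.hasDerivAt univ_mem

set_option maxHeartbeats 1600000 in
theorem stmt_13 (L U Δ : ℝ) (hL : 0 < L) (hU : 0 < U) (N : ℕ) (hN : 1 ≤ N)
    (t : ℕ → ℝ) (ht : ∀ k, 1 ≤ k → k ≤ N → t k ∈ Set.Ioc 0 (1 / L))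
    (htN : t (N + 1) = 1 / L)
    (hΔ : Δ = U ^ 2 * (∑ k ∈ Finset.Icc 1 N,
        min (-L ^ 2 * t k ^ 3 + 4 * t k) (-L * t k ^ 2 + 4 * t k) + 2 / L) / 4)
    (l : ℕ → ℝ) (hl : ∀ i, l i = U * ∑ k ∈ Finset.Icc i (N + 1), t k)
    (fv : ℕ → ℝ)
    (hfv : ∀ i, fv i = Δ - U ^ 2 / 4 * ∑ k ∈ Finset.Icc 1 (i - 1), (-L * t k ^ 2 + 4 * t k))
    (f : ℝ → ℝ)
    (hpiece1 : ∀ x, (l 1 + l 2) / 2 ≤ x →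
      f x = L / 2 * (x - l 1) ^ 2 + U * (x - l 1) + fv 1)
    (hpiece2 : ∀ i, 1 ≤ i → i ≤ N → ∀ x, l (i + 1) ≤ x → x ≤ (l i + l (i + 1)) / 2 →
      f x = -(L / 2) * (x - l (i + 1)) ^ 2 + U * (x - l (i + 1)) + fv (i + 1))
    (hpiece3 : ∀ i, 1 ≤ i → i ≤ N → ∀ x, (l (i + 1) + l (i + 2)) / 2 ≤ x → x ≤ l (i + 1) →
      f x = L / 2 * (x - l (i + 1)) ^ 2 + U * (x - l (i + 1)) + fv (i + 1))
    (hpiece4 : ∀ x, x ≤ l (N + 1) / 2 → f x = L / 2 * x ^ 2) :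
    Differentiable ℝ f ∧
    (∀ a b, |deriv f a - deriv f b| ≤ L * |a - b|) ∧
    (∀ x, 0 ≤ f x) ∧ f 0 = 0 ∧
    (∀ i, 1 ≤ i → i ≤ N + 1 → f (l i) = fv i ∧ deriv f (l i) = U) := by
  have hL' : (0:ℝ) < 1 / L := by positivity
  have ht' : ∀ k, 1 ≤ k → k ≤ N + 1 → 0 < t k ∧ t k ≤ 1 / L := by
    intro k h1 h2
    rcases eq_or_lt_of_le h2 with h | h
    · rw [h, htN]; exact ⟨hL', le_rfl⟩
    · exact ⟨(ht k h1 (by omega)).1, (ht k h1 (by omega)).2⟩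
  have hIccNe : (Finset.Icc 1 (N + 1)).Nonempty := ⟨1, by simp⟩
  set d : ℝ → ℝ := fun x => (Finset.Icc 1 (N + 1)).inf' hIccNe (fun i => |x - l i|) with hd
  set g : ℝ → ℝ := fun x => if x ≤ l 1 then U - L * d x else U + L * (x - l 1) with hg
  -- basic facts about l
  have lstep : ∀ i, 1 ≤ i → i ≤ N + 1 → l i = U * t i + l (i + 1) := by
    intro i h1 h2
    rw [hl, hl, show Finset.Icc i (N + 1) = insert i (Finset.Icc (i + 1) (N + 1)) by
      ext j; simp only [Finset.mem_Icc, Finset.mem_insert]; omega]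
    rw [Finset.sum_insert (by simp)]
    ring
  have lN1 : l (N + 1) = U / L := by
    rw [hl, Finset.Icc_self, Finset.sum_singleton, htN]; ring
  have lN2 : l (N + 2) = 0 := by
    rw [hl, Finset.Icc_eq_empty (by omega), Finset.sum_empty, mul_zero]
  have lmono : ∀ i j, 1 ≤ i → i ≤ j → l j ≤ l i := by
    intro i j h1 hij
    rw [hl, hl]
    apply mul_le_mul_of_nonneg_left _ hU.le
    apply Finset.sum_le_sum_of_subset_of_nonneg (Finset.Icc_subset_Icc hij le_rfl)
    intro k hk _
    rcases Finset.mem_Icc.mp hk with ⟨hk1, hk2⟩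
    exact (ht' k (by omega) hk2).1.le
  have lstrict : ∀ i, 1 ≤ i → i ≤ N + 1 → l (i + 1) < l i := by
    intro i h1 h2
    rw [lstep i h1 h2]
    nlinarith [(ht' i h1 h2).1]
  have lN1pos : 0 < l (N + 1) := by rw [lN1]; positivity
  have lpos : ∀ i, 1 ≤ i → i ≤ N + 1 → 0 < l i :=
    fun i h1 h2 => lt_of_lt_of_le lN1pos (lmono i (N + 1) h1 h2)
  have l1top : ∀ i, 1 ≤ i → l i ≤ l 1 := fun i h => lmono 1 i le_rfl h
  have hLlN1 : L * l (N + 1) = U := by rw [lN1]; field_simp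
  -- facts about d
  have dle : ∀ x i, 1 ≤ i → i ≤ N + 1 → d x ≤ |x - l i| := by
    intro x i h1 h2
    exact Finset.inf'_le _ (Finset.mem_Icc.mpr ⟨h1, h2⟩)
  have dge : ∀ x (v : ℝ), (∀ i, 1 ≤ i → i ≤ N + 1 → v ≤ |x - l i|) → v ≤ d x := by
    intro x v h
    exact Finset.le_inf' _ _ (fun i hi => h i (Finset.mem_Icc.mp hi).1 (Finset.mem_Icc.mp hi).2)
  have dnonneg : ∀ x, 0 ≤ d x := fun x => dge x 0 (fun i _ _ => abs_nonneg _)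
  have dself : ∀ i, 1 ≤ i → i ≤ N + 1 → d (l i) = 0 := by
    intro i h1 h2
    refine le_antisymm ?_ (dnonneg _)
    have := dle (l i) i h1 h2
    simpa using this
  have dlow : ∀ x, x ≤ l (N + 1) → d x = l (N + 1) - x := by
    intro x hx
    apply le_antisymm
    · have := dle x (N + 1) (by omega) le_rfl
      rwa [abs_of_nonpos (by linarith), neg_sub] at this
    · apply dge
      intro i h1 h2
      have := lmono i (N + 1) h1 h2
      rw [abs_of_nonpos (by linarith), neg_sub]
      linarith
  have gLi : ∀ i, 1 ≤ i → i ≤ N + 1 → g (l i) = U := by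
    intro i h1 h2
    rw [hg]
    simp only [if_pos (l1top i h1), dself i h1 h2]
    ring
  have gLow : ∀ x, x ≤ l (N + 1) → g x = L * x := by
    intro x hx
    have hx1 : x ≤ l 1 := le_trans hx (l1top (N + 1) (by omega))
    rw [hg]
    simp only [if_pos hx1, dlow x hx]
    linear_combination -hLlN1
  
  -- locate lemma
  have loc : ∀ x : ℝ, l (N + 1) ≤ x → x ≤ l 1 →
      ∃ i, 1 ≤ i ∧ i ≤ N ∧ l (i + 1) ≤ x ∧ x ≤ l i := by
    intro x hxl hxu
    have key : ∀ M, M ≤ N → l (M + 1) ≤ x →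
        ∃ i, 1 ≤ i ∧ i ≤ N ∧ l (i + 1) ≤ x ∧ x ≤ l i := by
      intro M
      induction M with
      | zero =>
        intro _ h1x
        refine ⟨1, le_rfl, hN, ?_, hxu⟩
        have := lmono 1 2 le_rfl (by omega)
        linarith
      | succ M ih =>
        intro hMN hMx
        by_cases hx2 : l (M + 1) ≤ x
        · exact ih (by omega) hx2
        · exact ⟨M + 1, by omega, hMN, hMx, le_of_not_ge hx2⟩
    exact key N le_rfl hxl
  -- derivative at breakpoints l (i+1), i ∈ [1,N]
  have caseNode : ∀ i, 1 ≤ i → i ≤ N → HasDerivAt f U (l (i + 1)) := by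
    intro i h1 h2
    have hax : (l (i + 1) + l (i + 2)) / 2 < l (i + 1) := by
      have := lstrict (i + 1) (by omega) (by omega)
      linarith
    have hxb : l (i + 1) < (l i + l (i + 1)) / 2 := by
      have := lstrict i h1 (by omega)
      linarith
    have hA' : HasDerivAt
        (fun y : ℝ => L / 2 * (y - l (i + 1)) ^ 2 + U * (y - l (i + 1)) + fv (i + 1)) U
        (l (i + 1)) := by
      have := quad1 (L / 2) (l (i + 1)) U (fv (i + 1)) (l (i + 1))
      convert this using 1
      ring
    have hB' : HasDerivAt
        (fun y : ℝ => -(L / 2) * (y - l (i + 1)) ^ 2 + U * (y - l (i + 1)) + fv (i + 1)) U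
        (l (i + 1)) := by
      have := quad1 (-(L / 2)) (l (i + 1)) U (fv (i + 1)) (l (i + 1))
      convert this using 1
      ring
    exact glueDeriv hax hxb
      (fun y hy1 hy2 => hpiece3 i h1 h2 y hy1.le hy2)
      (fun y hy1 hy2 => hpiece2 i h1 h2 y hy1 hy2.le)
      hA' hB'
  -- the main derivative computation
  have hasD : ∀ x, HasDerivAt f (g x) x := by
    intro x
    rcases lt_trichotomy x (l (N + 1)) with hx | hx | hx
    · -- x < l (N+1) : derivative is L * x
      rw [gLow x hx.le]
      rcases lt_trichotomy x (l (N + 1) / 2) with h2 | h2 | h2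
      · -- interior of piece 4
        have h := localDeriv (a := x - 1) (b := l (N + 1) / 2) (by linarith) h2
          (fun y _ hy => hpiece4 y hy.le) (quad4 (L / 2) x)
        convert h using 1
        ring
      · -- gluing point l (N+1) / 2
        have hB' : HasDerivAt
            (fun y : ℝ => L / 2 * (y - l (N + 1)) ^ 2 + U * (y - l (N + 1)) + fv (N + 1))
            (L * x) x := by
          have := quad1 (L / 2) (l (N + 1)) U (fv (N + 1)) x
          convert this using 1
          linear_combination hLlN1
        have hA' : HasDerivAt (fun y : ℝ => L / 2 * y ^ 2) (L * x) x := by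
          have := quad4 (L / 2) x
          convert this using 1
          ring
        exact glueDeriv (a := x - 1) (b := l (N + 1)) (by linarith) (by linarith)
          (fun y _ hy => hpiece4 y (by linarith))
          (fun y hy1 hy2 => hpiece3 N hN le_rfl y (by rw [lN2]; linarith) hy2.le)
          hA' hB'
      · -- interior of piece 3 (i = N)
        have h := localDeriv (a := l (N + 1) / 2) (b := l (N + 1)) h2 hx
          (fun y hy1 hy2 => hpiece3 N hN le_rfl y (by rw [lN2]; linarith) hy2.le)
          (quad1 (L / 2) (l (N + 1)) U (fv (N + 1)) x)
        convert h using 1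
        linear_combination hLlN1
    · -- x = l (N+1)
      subst hx
      rw [gLi (N + 1) (by omega) le_rfl]
      exact caseNode N hN le_rfl
    · -- x > l (N+1)
      by_cases hx1 : (l 1 + l 2) / 2 < x
      · -- piece 1 territory
        have h := localDeriv (a := (l 1 + l 2) / 2) (b := x + 1) hx1 (by linarith)
          (fun y hy _ => hpiece1 y hy.le) (quad1 (L / 2) (l 1) U (fv 1) x)
        by_cases hxl1 : x ≤ l 1
        · have hdx : d x = l 1 - x := by
            apply le_antisymm
            · have := dle x 1 le_rfl (by omega)
              rwa [abs_of_nonpos (by linarith), neg_sub] at this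
            · apply dge
              intro j hj1 hj2
              rcases eq_or_lt_of_le hj1 with heq | hj
              · rw [← heq, abs_of_nonpos (by linarith), neg_sub]
              · have h2j : l j ≤ l 2 := lmono 2 j (by omega) hj
                have h12 := lstrict 1 le_rfl (by omega)
                calc l 1 - x ≤ x - l j := by linarith
                  _ ≤ |x - l j| := le_abs_self _
          rw [hg]
          simp only [if_pos hxl1, hdx]
          convert h using 1
          ring
        · rw [hg]
          simp only [if_neg hxl1]
          convert h using 1
          ring
      · push_neg at hx1
        have h12 := lstrict 1 le_rfl (by omega)
        have hxl1 : x < l 1 := by linarith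
        obtain ⟨i, hi1, hiN, hxlo, hxhi⟩ := loc x hx.le hxl1.le
        have hdlo : x ≤ (l i + l (i + 1)) / 2 → d x = x - l (i + 1) := by
          intro hm
          apply le_antisymm
          · have := dle x (i + 1) (by omega) (by omega)
            rwa [abs_of_nonneg (by linarith)] at this
          · apply dge
            intro j hj1 hj2
            rcases le_or_gt j i with hji | hji
            · have := lmono j i hj1 hji
              calc x - l (i + 1) ≤ l j - x := by linarith
                _ = |l j - x| := (abs_of_nonneg (by linarith)).symm
                _ = |x - l j| := abs_sub_comm _ _
            · have := lmono (i + 1) j (by omega) hji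
              calc x - l (i + 1) ≤ x - l j := by linarith
                _ ≤ |x - l j| := le_abs_self _
        have hdhi : (l i + l (i + 1)) / 2 ≤ x → d x = l i - x := by
          intro hm
          apply le_antisymm
          · have := dle x i (by omega) (by omega)
            rwa [abs_of_nonpos (by linarith), neg_sub] at this
          · apply dge
            intro j hj1 hj2
            rcases le_or_gt j i with hji | hji
            · have := lmono j i hj1 hji
              calc l i - x ≤ l j - x := by linarith
                _ = |l j - x| := (abs_of_nonneg (by linarith)).symm
                _ = |x - l j| := abs_sub_comm _ _
            · have := lmono (i + 1) j (by omega) hji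
              calc l i - x ≤ x - l j := by linarith
                _ ≤ |x - l j| := le_abs_self _
        rcases eq_or_lt_of_le hxlo with heq | hlo
        · rw [← heq, gLi (i + 1) (by omega) (by omega)]
          exact caseNode i hi1 hiN
        · rcases eq_or_lt_of_le hxhi with heq | hhi
          · have hi2 : 2 ≤ i := by
              by_contra hcon
              have : i = 1 := by omega
              rw [this] at heq
              rw [heq] at hxl1
              exact lt_irrefl _ hxl1
            obtain ⟨j, rfl⟩ : ∃ j, i = j + 1 := ⟨i - 1, by omega⟩
            rw [heq, gLi (j + 1) (by omega) (by omega)]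
            exact caseNode j (by omega) (by omega)
          · -- l (i+1) < x < l i
            rcases lt_trichotomy x ((l i + l (i + 1)) / 2) with hm | hm | hm
            · -- interior of piece 2
              have h := localDeriv (a := l (i + 1)) (b := (l i + l (i + 1)) / 2) hlo hm
                (fun y hy1 hy2 => hpiece2 i hi1 hiN y hy1.le hy2.le)
                (quad1 (-(L / 2)) (l (i + 1)) U (fv (i + 1)) x)
              rw [hg]
              simp only [if_pos hxl1.le, hdlo hm.le]
              convert h using 1
              ring
            · -- gluing point (l i + l (i+1)) / 2
              rw [hg]
              simp only [if_pos hxl1.le, hdlo hm.le]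
              have hA' : HasDerivAt
                  (fun y : ℝ => -(L / 2) * (y - l (i + 1)) ^ 2 + U * (y - l (i + 1)) + fv (i + 1))
                  (U - L * (x - l (i + 1))) x := by
                have := quad1 (-(L / 2)) (l (i + 1)) U (fv (i + 1)) x
                convert this using 1
                ring
              by_cases hi2 : 2 ≤ i
              · obtain ⟨j, rfl⟩ : ∃ j, i = j + 1 := ⟨i - 1, by omega⟩
                have hB' : HasDerivAt
                    (fun y : ℝ => L / 2 * (y - l (j + 1)) ^ 2 + U * (y - l (j + 1)) + fv (j + 1))
                    (U - L * (x - l (j + 1 + 1))) x := by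
                  have := quad1 (L / 2) (l (j + 1)) U (fv (j + 1)) x
                  convert this using 1
                  linear_combination (-2 * L) * hm
                exact glueDeriv hlo hhi
                  (fun y hy1 hy2 => hpiece2 (j + 1) hi1 hiN y hy1.le (by linarith [hy2, hm]))
                  (fun y hy1 hy2 => hpiece3 j (by omega) (by omega) y (by linarith [hy1, hm]) hy2.le)
                  hA' hB'
              · have hieq : i = 1 := by omega
                subst hieq
                have hB' : HasDerivAt
                    (fun y : ℝ => L / 2 * (y - l 1) ^ 2 + U * (y - l 1) + fv 1)
                    (U - L * (x - l (1 + 1))) x := by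
                  have := quad1 (L / 2) (l 1) U (fv 1) x
                  convert this using 1
                  linear_combination (-2 * L) * hm
                exact glueDeriv (b := x + 1) hlo (by linarith)
                  (fun y hy1 hy2 => hpiece2 1 le_rfl hN y hy1.le (by linarith [hy2, hm]))
                  (fun y hy1 _ => hpiece1 y (by linarith [hy1, hm]))
                  hA' hB'
            · -- m_i < x < l i : interior of piece 3 (i-1) or piece 1
              rw [hg]
              simp only [if_pos hxl1.le, hdhi hm.le]
              by_cases hi2 : 2 ≤ i
              · obtain ⟨j, rfl⟩ : ∃ j, i = j + 1 := ⟨i - 1, by omega⟩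
                have h := localDeriv (a := (l (j + 1) + l (j + 1 + 1)) / 2) (b := l (j + 1)) hm hhi
                  (fun y hy1 hy2 => hpiece3 j (by omega) (by omega) y hy1.le hy2.le)
                  (quad1 (L / 2) (l (j + 1)) U (fv (j + 1)) x)
                convert h using 1
                ring
              · have hieq : i = 1 := by omega
                subst hieq
                have h := localDeriv (a := (l 1 + l 2) / 2) (b := x + 1) hm (by linarith)
                  (fun y hy1 _ => hpiece1 y hy1.le)
                  (quad1 (L / 2) (l 1) U (fv 1) x)
                convert h using 1
                ring
  
  have hdiff : Differentiable ℝ f := fun x => (hasD x).differentiableAt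
  have hderiv : ∀ x, deriv f x = g x := fun x => (hasD x).deriv
  -- Lipschitz property of g
  have dlip : ∀ a b : ℝ, d a ≤ d b + |a - b| := by
    intro a b
    obtain ⟨j, hj, hjv⟩ := Finset.exists_mem_eq_inf' hIccNe (fun i => |b - l i|)
    have hj1 := (Finset.mem_Icc.mp hj).1
    have hj2 := (Finset.mem_Icc.mp hj).2
    have hdb : d b = |b - l j| := hjv
    calc d a ≤ |a - l j| := dle a j hj1 hj2
      _ = |(a - b) + (b - l j)| := by ring_nf
      _ ≤ |a - b| + |b - l j| := abs_add_le _ _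
      _ = d b + |a - b| := by rw [hdb]; ring
  have dlipAbs : ∀ a b : ℝ, |d a - d b| ≤ |a - b| := by
    intro a b
    rw [abs_sub_le_iff]
    constructor
    · linarith [dlip a b]
    · have := dlip b a
      rw [abs_sub_comm b a] at this
      linarith
  have glip : ∀ a b : ℝ, |g a - g b| ≤ L * |a - b| := by
    intro a b
    by_cases ha : a ≤ l 1 <;> by_cases hb : b ≤ l 1
    · rw [hg]
      simp only [if_pos ha, if_pos hb]
      have h1 : (U - L * d a) - (U - L * d b) = -(L * (d a - d b)) := by ring
      rw [h1, abs_neg, abs_mul, abs_of_pos hL]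
      exact mul_le_mul_of_nonneg_left (dlipAbs a b) hL.le
    · push_neg at hb
      have hda : d a ≤ l 1 - a := by
        have := dle a 1 le_rfl (by omega)
        rwa [abs_of_nonpos (by linarith), neg_sub] at this
      rw [hg]
      simp only [if_pos ha, if_neg (not_le.mpr hb)]
      rw [abs_of_nonpos (by nlinarith [dnonneg a]), abs_of_nonpos (by linarith)]
      nlinarith [dnonneg a]
    · push_neg at ha
      have hdb : d b ≤ l 1 - b := by
        have := dle b 1 le_rfl (by omega)
        rwa [abs_of_nonpos (by linarith), neg_sub] at this
      rw [hg]
      simp only [if_pos hb, if_neg (not_le.mpr ha)]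
      rw [abs_of_nonneg (by nlinarith [dnonneg b]), abs_of_nonneg (by linarith)]
      nlinarith [dnonneg b]
    · push_neg at ha hb
      rw [hg]
      simp only [if_neg (not_le.mpr ha), if_neg (not_le.mpr hb)]
      have h1 : (U + L * (a - l 1)) - (U + L * (b - l 1)) = L * (a - b) := by ring
      rw [h1, abs_mul, abs_of_pos hL]
  -- sign of g
  have gpos : ∀ x : ℝ, 0 ≤ x → 0 ≤ g x := by
    intro x hx
    by_cases h1 : x ≤ l 1
    · by_cases h2 : x ≤ l (N + 1)
      · rw [gLow x h2]
        positivity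
      · push_neg at h2
        obtain ⟨i, hi1, hiN, hxlo, hxhi⟩ := loc x h2.le h1
        have hti := ht' i hi1 (by omega)
        have hstep := lstep i hi1 (by omega)
        have hda : d x ≤ U * t i := by
          have := dle x (i + 1) (by omega) (by omega)
          rw [abs_of_nonneg (by linarith)] at this
          linarith
        have hLt : L * t i ≤ 1 := by
          have := hti.2
          rw [le_div_iff₀ hL] at this
          linarith
        rw [hg]
        simp only [if_pos h1]
        nlinarith [mul_le_mul_of_nonneg_left hda hL.le, mul_nonneg hU.le (sub_nonneg.mpr hLt)]
    · push_neg at h1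
      rw [hg]
      simp only [if_neg (not_le.mpr h1)]
      nlinarith
  have gneg : ∀ x : ℝ, x ≤ 0 → g x ≤ 0 := by
    intro x hx
    rw [gLow x (by linarith)]
    exact mul_nonpos_of_nonneg_of_nonpos hL.le hx
  have hf0 : f 0 = 0 := by
    have := hpiece4 0 (by linarith)
    simpa using this
  have mono : MonotoneOn f (Set.Ici 0) := by
    apply monotoneOn_of_deriv_nonneg (convex_Ici 0) hdiff.continuous.continuousOn
      hdiff.differentiableOn
    intro x hx
    rw [interior_Ici, Set.mem_Ioi] at hx
    rw [hderiv]
    exact gpos x hx.le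
  have anti : AntitoneOn f (Set.Iic 0) := by
    apply antitoneOn_of_deriv_nonpos (convex_Iic 0) hdiff.continuous.continuousOn
      hdiff.differentiableOn
    intro x hx
    rw [interior_Iic, Set.mem_Iio] at hx
    rw [hderiv]
    exact gneg x hx.le
  have hfnn : ∀ x, 0 ≤ f x := by
    intro x
    rcases le_total 0 x with h | h
    · have := mono (Set.mem_Ici.mpr le_rfl) (Set.mem_Ici.mpr h) h
      linarith
    · have := anti (Set.mem_Iic.mpr h) (Set.mem_Iic.mpr le_rfl) h
      linarith
  refine ⟨hdiff, ?_, hfnn, hf0, ?_⟩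
  · intro a b
    rw [hderiv, hderiv]
    exact glip a b
  · intro i h1 h2
    constructor
    · rcases eq_or_lt_of_le h1 with heq | hgt
      · rw [← heq]
        have h12 := lstrict 1 le_rfl (by omega)
        rw [hpiece1 (l 1) (by linarith)]
        ring
      · obtain ⟨j, rfl⟩ : ∃ j, i = j + 1 := ⟨i - 1, by omega⟩
        have hj1 : 1 ≤ j := by omega
        have hjN : j ≤ N := by omega
        rw [hpiece2 j hj1 hjN (l (j + 1)) le_rfl (by linarith [lstrict j hj1 (by omega)])]
        ring
    · rw [hderiv]
      exact gLi i h1 h2
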